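/- arXiv:2502.00794 — 2 statements merged into one kernel-verified Lean document; each statement's English description precedes it below -/
import Mathlib

section
/- Let f : Ω → X be a function into a metric space X and let (fₙ) be a sequence of functions with finite range such that m*(d(f, fₙ) > 2⁻ⁿ) ≤ 2⁻⁽ⁿ⁺¹⁾ for all n, where m* is the outer measure of a finitely additive probability m on an algebra of subsets of Ω. Then the countable set K = ⋃ₙ fₙ[Ω] has the property that for every ε > 0, m*({ω : dist(f(ω), K) > ε}) = 0. -/
/-- The observation at the start of Section 4: if `(fₙ)` is a sequence of finite-range
functions with `m*(d(f, fₙ) > 2⁻ⁿ) ≤ 2⁻⁽ⁿ⁺¹⁾` (where `m*` is the outer measure induced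
by a finitely additive probability `m` on an algebra `𝒜`), then the countable set
`K = ⋃ₙ fₙ[Ω]` satisfies `m*({dist(f, K) > ε}) = 0` for every `ε > 0`, i.e. `K` is an
`m`-cover of `f`. -/
theorem stmt13 {Ω X : Type*} [MetricSpace X] (𝒜 : Set (Set Ω)) (m : Set Ω → ℝ)
    (huniv : Set.univ ∈ 𝒜) (hcompl : ∀ A ∈ 𝒜, Aᶜ ∈ 𝒜)
    (hunion : ∀ A ∈ 𝒜, ∀ B ∈ 𝒜, A ∪ B ∈ 𝒜)
    (hnonneg : ∀ A ∈ 𝒜, 0 ≤ m A) (hone : m Set.univ = 1)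
    (hadd : ∀ A ∈ 𝒜, ∀ B ∈ 𝒜, Disjoint A B → m (A ∪ B) = m A + m B)
    (mStar : Set Ω → ℝ)
    (hmStar : ∀ E : Set Ω, mStar E = sInf {r | ∃ A ∈ 𝒜, E ⊆ A ∧ m A = r})
    (f : Ω → X) (fn : ℕ → Ω → X)
    (hfinite : ∀ n, (Set.range (fn n)).Finite)
    (happrox : ∀ n : ℕ,
      mStar {ω | (2 : ℝ)⁻¹ ^ n < dist (f ω) (fn n ω)} ≤ (2 : ℝ)⁻¹ ^ (n + 1)) :
    ∀ ε : ℝ, 0 < ε →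
      mStar {ω | ε < Metric.infDist (f ω) (⋃ n, Set.range (fn n))} = 0 := by
  intro ε hε
  -- outer measure is nonnegative
  have h0 : ∀ E : Set Ω, 0 ≤ mStar E := by
    intro E
    rw [hmStar]
    apply Real.sInf_nonneg
    rintro r ⟨A, hA, -, rfl⟩
    exact hnonneg A hA
  -- outer measure is monotone
  have hmono : ∀ E F : Set Ω, E ⊆ F → mStar E ≤ mStar F := by
    intro E F hEF
    rw [hmStar, hmStar]
    apply csInf_le_csInf
    · exact ⟨0, fun r ⟨A, hA, _, hr⟩ => hr ▸ hnonneg A hA⟩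
    · exact ⟨1, Set.univ, huniv, Set.subset_univ _, hone⟩
    · rintro r ⟨A, hA, hFA, rfl⟩
      exact ⟨A, hA, hEF.trans hFA, rfl⟩
  set E := {ω | ε < Metric.infDist (f ω) (⋃ n, Set.range (fn n))} with hE
  -- for every n with 2⁻ⁿ ≤ ε, E ⊆ Eₙ
  have hsub : ∀ n : ℕ, (2 : ℝ)⁻¹ ^ n ≤ ε →
      E ⊆ {ω | (2 : ℝ)⁻¹ ^ n < dist (f ω) (fn n ω)} := by
    intro n hn ω hω
    have hmem : fn n ω ∈ ⋃ k, Set.range (fn k) :=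
      Set.mem_iUnion.2 ⟨n, Set.mem_range_self ω⟩
    have := Metric.infDist_le_dist_of_mem hmem (x := f ω)
    exact lt_of_le_of_lt hn (lt_of_lt_of_le hω this)
  refine le_antisymm ?_ (h0 E)
  -- show mStar E ≤ δ for every δ > 0
  refine le_of_forall_pos_le_add ?_
  intro δ hδ
  obtain ⟨n, hn⟩ := exists_pow_lt_of_lt_one hδ (by norm_num : (2 : ℝ)⁻¹ < 1)
  obtain ⟨k, hk⟩ := exists_pow_lt_of_lt_one hε (by norm_num : (2 : ℝ)⁻¹ < 1)
  set N := max n k with hN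
  have hpowN : (2 : ℝ)⁻¹ ^ N ≤ ε :=
    le_of_lt (lt_of_le_of_lt (pow_le_pow_of_le_one (by norm_num) (by norm_num)
      (le_max_right n k)) hk)
  have h1 : mStar E ≤ (2 : ℝ)⁻¹ ^ (N + 1) :=
    le_trans (hmono _ _ (hsub N hpowN)) (happrox N)
  have h2 : (2 : ℝ)⁻¹ ^ (N + 1) < δ :=
    lt_of_le_of_lt (pow_le_pow_of_le_one (by norm_num) (by norm_num)
      (le_trans (le_max_left n k) (Nat.le_succ N))) hn
  linarith
end

section
/- Let X be a metric space, m a finitely additive probability on an algebra 𝒜 of subsets of Ω, f : Ω → X, and h : X → ℝ bounded and uniformly continuous. Suppose K ⊆ X satisfies: for every ε > 0 and δ > 0 there exists A ∈ 𝒜 with m(A) > 1 − δ and f[A] contained in the ε-neighborhood of K. Then ∫* h(f) dm ≥ inf_{z ∈ K} h(z), where ∫* denotes the upper (finitely additive) integral. -/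
section Aux
variable {Ω : Type*} {𝒜 : Set (Set Ω)} {m : Set Ω → ℝ}

lemma aux_empty_mem (huniv : Set.univ ∈ 𝒜) (hcompl : ∀ A ∈ 𝒜, Aᶜ ∈ 𝒜) :
    (∅ : Set Ω) ∈ 𝒜 := by simpa using hcompl _ huniv

lemma aux_biUnion_mem (huniv : Set.univ ∈ 𝒜) (hcompl : ∀ A ∈ 𝒜, Aᶜ ∈ 𝒜)
    (hunion : ∀ A ∈ 𝒜, ∀ B ∈ 𝒜, A ∪ B ∈ 𝒜)
    {ι : Type*} [DecidableEq ι] (D : ι → Set Ω) (hD : ∀ i, D i ∈ 𝒜) (t : Finset ι) :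
    (⋃ i ∈ t, D i) ∈ 𝒜 := by
  induction t using Finset.induction_on with
  | empty => simpa using aux_empty_mem huniv hcompl
  | insert _ _ ha ih =>
      rw [Finset.set_biUnion_insert]
      exact hunion _ (hD _) _ ih

lemma aux_iInter_mem (huniv : Set.univ ∈ 𝒜) (hcompl : ∀ A ∈ 𝒜, Aᶜ ∈ 𝒜)
    (hunion : ∀ A ∈ 𝒜, ∀ B ∈ 𝒜, A ∪ B ∈ 𝒜)
    {ι : Type*} [Fintype ι] [DecidableEq ι] (D : ι → Set Ω) (hD : ∀ i, D i ∈ 𝒜) :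
    (⋂ i, D i) ∈ 𝒜 := by
  have : (⋂ i, D i) = (⋃ i ∈ Finset.univ, (D i)ᶜ)ᶜ := by
    ext ω; simp
  rw [this]
  exact hcompl _ (aux_biUnion_mem huniv hcompl hunion _ (fun i => hcompl _ (hD i)) _)

lemma aux_m_empty (huniv : Set.univ ∈ 𝒜) (hcompl : ∀ A ∈ 𝒜, Aᶜ ∈ 𝒜)
    (hadd : ∀ A ∈ 𝒜, ∀ B ∈ 𝒜, Disjoint A B → m (A ∪ B) = m A + m B) :
    m ∅ = 0 := by
  have he := aux_empty_mem huniv hcompl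
  have := hadd ∅ he ∅ he (by simp)
  simp only [Set.union_empty] at this
  linarith

lemma aux_m_sum (huniv : Set.univ ∈ 𝒜) (hcompl : ∀ A ∈ 𝒜, Aᶜ ∈ 𝒜)
    (hunion : ∀ A ∈ 𝒜, ∀ B ∈ 𝒜, A ∪ B ∈ 𝒜)
    (hadd : ∀ A ∈ 𝒜, ∀ B ∈ 𝒜, Disjoint A B → m (A ∪ B) = m A + m B)
    {ι : Type*} [DecidableEq ι] (E : ι → Set Ω) (hE : ∀ i, E i ∈ 𝒜)
    (hdis : ∀ i j, i ≠ j → Disjoint (E i) (E j)) (t : Finset ι) :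
    m (⋃ i ∈ t, E i) = ∑ i ∈ t, m (E i) := by
  induction t using Finset.induction_on with
  | empty => simpa using aux_m_empty huniv hcompl hadd
  | @insert a t ha ih =>
      rw [Finset.set_biUnion_insert, Finset.sum_insert ha, ← ih]
      refine hadd _ (hE a) _ (aux_biUnion_mem huniv hcompl hunion _ hE _) ?_
      simp only [Set.disjoint_iUnion_right]
      intro i hi
      exact hdis a i (fun hai => ha (hai ▸ hi))
end Aux

/-- Key estimate in the proof of Theorem 3.2: if `K` is an `m`-cover of `f` (for every
`ε, δ > 0` there is `A ∈ 𝒜` with `m(A) > 1 − δ` and `f[A]` inside the `ε`-neighborhood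
of `K`) and `h` is bounded and uniformly continuous, then the upper finitely additive
integral of `h ∘ f` (infimum of the integrals of dominating `𝒜`-simple functions) is at
least `inf_{z ∈ K} h(z)`. -/
theorem stmt14 {Ω X : Type*} [MetricSpace X] (𝒜 : Set (Set Ω)) (m : Set Ω → ℝ)
    (huniv : Set.univ ∈ 𝒜) (hcompl : ∀ A ∈ 𝒜, Aᶜ ∈ 𝒜)
    (hunion : ∀ A ∈ 𝒜, ∀ B ∈ 𝒜, A ∪ B ∈ 𝒜)
    (hnonneg : ∀ A ∈ 𝒜, 0 ≤ m A) (hone : m Set.univ = 1)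
    (hadd : ∀ A ∈ 𝒜, ∀ B ∈ 𝒜, Disjoint A B → m (A ∪ B) = m A + m B)
    (f : Ω → X) (h : X → ℝ) (M : ℝ) (hbd : ∀ x, |h x| ≤ M)
    (huc : ∀ ε : ℝ, 0 < ε → ∃ δ : ℝ, 0 < δ ∧ ∀ x y : X, dist x y < δ → |h x - h y| < ε)
    (K : Set X)
    (hcover : ∀ ε : ℝ, 0 < ε → ∀ δ : ℝ, 0 < δ →
      ∃ A ∈ 𝒜, 1 - δ < m A ∧ ∀ ω ∈ A, ∃ z ∈ K, dist (f ω) z < ε) :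
    sInf (h '' K) ≤
      sInf {r | ∃ (n : ℕ) (B : Fin n → Set Ω) (c : Fin n → ℝ),
        (∀ i, B i ∈ 𝒜) ∧
        (∀ ω, h (f ω) ≤ ∑ i, c i * (B i).indicator (fun _ => (1 : ℝ)) ω) ∧
        r = ∑ i, c i * m (B i)} := by
  classical
  have hm_empty : m ∅ = 0 := aux_m_empty huniv hcompl hadd
  -- K is nonempty
  have hKne : K.Nonempty := by
    by_contra hK
    obtain ⟨A, hA, hmA, hA2⟩ := hcover 1 one_pos (1/2) (by norm_num)
    have hAe : A = ∅ := by
      ext ω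
      simp only [Set.mem_empty_iff_false, iff_false]
      intro hω
      obtain ⟨z, hz, -⟩ := hA2 ω hω
      exact hK ⟨z, hz⟩
    rw [hAe, hm_empty] at hmA
    linarith
  set L := sInf (h '' K) with hLdef
  have hbddK : BddBelow (h '' K) := by
    refine ⟨-M, ?_⟩
    rintro y ⟨z, -, rfl⟩
    exact neg_le_of_abs_le (hbd z)
  have hM0 : 0 ≤ M := le_trans (abs_nonneg _) (hbd hKne.choose)
  apply le_csInf
  · refine ⟨M, 1, fun _ => Set.univ, fun _ => M, fun _ => huniv, ?_, ?_⟩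
    · intro ω
      rw [Fin.sum_univ_one]
      simpa using le_of_abs_le (hbd (f ω))
    · rw [Fin.sum_univ_one, hone, mul_one]
  rintro r ⟨n, B, c, hB, hdom, rfl⟩
  -- it suffices to show L ≤ r + ε for all ε > 0
  refine le_of_forall_pos_le_add ?_
  intro ε hε
  set ε1 := ε / 2 with hε1def
  have hε1 : 0 < ε1 := by positivity
  obtain ⟨δ0, hδ0, hδ0uc⟩ := huc ε1 hε1
  set D := |L - ε1| + M with hDdef
  have hD0 : 0 ≤ D := by positivity
  set δ := ε1 / (D + 1) with hδdef
  have hδ : 0 < δ := by positivity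
  obtain ⟨A, hA, hmA, hAprop⟩ := hcover δ0 hδ0 δ hδ
  -- on A, h ∘ f ≥ L - ε1
  have hAbig : ∀ ω ∈ A, L - ε1 ≤ h (f ω) := by
    intro ω hω
    obtain ⟨z, hz, hdz⟩ := hAprop ω hω
    have h1 : |h (f ω) - h z| < ε1 := hδ0uc _ _ hdz
    have h2 : L ≤ h z := csInf_le hbddK ⟨z, hz, rfl⟩
    have := abs_lt.1 h1
    linarith [this.1]
  have hmAc : m A + m Aᶜ = 1 := by
    have := hadd A hA Aᶜ (hcompl _ hA) disjoint_compl_right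
    rwa [Set.union_compl_self, hone, eq_comm] at this
  -- atoms
  set ι := Option (Fin n) with hιdef
  set C : ι → Set Ω := fun o => o.elim A B with hCdef
  have hC : ∀ o, C o ∈ 𝒜 := by rintro (_ | i); exacts [hA, hB i]
  set E : (ι → Bool) → Set Ω :=
    fun s => ⋂ o, (if s o = true then C o else (C o)ᶜ) with hEdef
  have hE : ∀ s, E s ∈ 𝒜 := by
    intro s
    refine aux_iInter_mem huniv hcompl hunion _ ?_
    intro o
    by_cases hs : s o = true <;> simp only [hs, if_true, if_false]
    · exact hC o
    · exact hcompl _ (hC o)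
  have hmemE : ∀ (ω : Ω) (s : ι → Bool), ω ∈ E s ↔ ∀ o, (ω ∈ C o ↔ s o = true) := by
    intro ω s
    rw [hEdef]
    simp only [Set.mem_iInter]
    refine forall_congr' fun o => ?_
    by_cases hs : s o = true <;> simp [hs]
  have hdisE : ∀ s t : ι → Bool, s ≠ t → Disjoint (E s) (E t) := by
    intro s t hst
    rw [Set.disjoint_left]
    intro ω hωs hωt
    refine hst (funext fun o => ?_)
    have h1 := (hmemE ω s).1 hωs o
    have h2 := (hmemE ω t).1 hωt o
    by_cases hω : ω ∈ C o
    · rw [h1.1 hω, h2.1 hω]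
    · cases hso : s o <;> cases hto : t o
      · rfl
      · exact absurd (h2.2 hto) hω
      · exact absurd (h1.2 hso) hω
      · rfl
  have hsig : ∀ ω : Ω, ω ∈ E (fun o => decide (ω ∈ C o)) := by
    intro ω
    rw [hmemE]
    intro o
    simp
  have hdecomp : ∀ j : ι,
      C j = ⋃ s ∈ Finset.univ.filter (fun s : ι → Bool => s j = true), E s := by
    intro j
    ext ω
    simp only [Set.mem_iUnion, Finset.mem_filter, Finset.mem_univ, true_and, exists_prop]
    constructor
    · intro hω
      exact ⟨fun o => decide (ω ∈ C o), by simpa using hω, hsig ω⟩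
    · rintro ⟨s, hsj, hωs⟩
      exact ((hmemE ω s).1 hωs j).2 hsj
  have hdecompc : ∀ j : ι,
      (C j)ᶜ = ⋃ s ∈ Finset.univ.filter (fun s : ι → Bool => ¬ (s j = true)), E s := by
    intro j
    ext ω
    simp only [Set.mem_compl_iff, Set.mem_iUnion, Finset.mem_filter, Finset.mem_univ,
      true_and, exists_prop]
    constructor
    · intro hω
      exact ⟨fun o => decide (ω ∈ C o), by simpa using hω, hsig ω⟩
    · rintro ⟨s, hsj, hωs⟩ hωC
      exact hsj (((hmemE ω s).1 hωs j).1 hωC)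
  have hmC : ∀ j : ι,
      m (C j) = ∑ s ∈ Finset.univ.filter (fun s : ι → Bool => s j = true), m (E s) := by
    intro j
    rw [hdecomp j]
    exact aux_m_sum huniv hcompl hunion hadd E hE hdisE _
  have hmCc : ∀ j : ι,
      m ((C j)ᶜ) = ∑ s ∈ Finset.univ.filter (fun s : ι → Bool => ¬ (s j = true)),
        m (E s) := by
    intro j
    rw [hdecompc j]
    exact aux_m_sum huniv hcompl hunion hadd E hE hdisE _
  -- rewrite r as a sum over atoms
  have hrewrite : ∑ i, c i * m (B i) =
      ∑ s : ι → Bool, (∑ i, if s (some i) = true then c i else 0) * m (E s) := by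
    have h1 : ∀ i : Fin n, c i * m (B i) =
        ∑ s : ι → Bool, (if s (some i) = true then c i else 0) * m (E s) := by
      intro i
      have : m (B i) = m (C (some i)) := rfl
      rw [this, hmC (some i), Finset.mul_sum, Finset.sum_filter]
      congr 1
      ext s
      by_cases hs : s (some i) = true <;> simp [hs]
    simp only [h1]
    rw [Finset.sum_comm]
    congr 1
    ext s
    rw [Finset.sum_mul]
  -- per-atom lower bound
  have hkey : ∀ s : ι → Bool,
      (if s none = true then L - ε1 else -M) * m (E s) ≤
        (∑ i, if s (some i) = true then c i else 0) * m (E s) := by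
    intro s
    rcases Set.eq_empty_or_nonempty (E s) with hEs | ⟨ω, hω⟩
    · simp [hEs, hm_empty]
    · refine mul_le_mul_of_nonneg_right ?_ (hnonneg _ (hE s))
      have hg : (∑ i, if s (some i) = true then c i else 0) =
          ∑ i, c i * (B i).indicator (fun _ => (1 : ℝ)) ω := by
        refine Finset.sum_congr rfl fun i _ => ?_
        have hmem := (hmemE ω s).1 hω (some i)
        by_cases hs : s (some i) = true
        · have : ω ∈ B i := hmem.2 hs
          simp [hs, Set.indicator_of_mem this]
        · have : ω ∉ B i := fun hωB => hs (hmem.1 hωB)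
          simp [hs, Set.indicator_of_notMem this]
      rw [hg]
      refine le_trans ?_ (hdom ω)
      by_cases hs : s none = true
      · have hωA : ω ∈ A := ((hmemE ω s).1 hω none).2 hs
        simpa [hs] using hAbig ω hωA
      · simpa [hs] using neg_le_of_abs_le (hbd (f ω))
  -- combine
  have hsum : (L - ε1) * m A + (-M) * m Aᶜ ≤ ∑ i, c i * m (B i) := by
    rw [hrewrite]
    have : (L - ε1) * m A + (-M) * m Aᶜ =
        ∑ s : ι → Bool, (if s none = true then L - ε1 else -M) * m (E s) := by
      have hAC : A = C none := rfl
      rw [hAC, hmC none, hmCc none]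
      rw [Finset.mul_sum, Finset.mul_sum]
      rw [show (fun s : ι → Bool => ((if s none = true then L - ε1 else -M) * m (E s)))
          = fun s => (if s none = true then (L - ε1) * m (E s) else (-M) * m (E s)) by
        ext s; by_cases hs : s none = true <;> simp [hs]]
      rw [Finset.sum_ite]
    rw [this]
    exact Finset.sum_le_sum fun s _ => hkey s
  -- final arithmetic
  have hmA1 : m A ≤ 1 := by
    have := hnonneg _ (hcompl _ hA)
    linarith
  have hmAcδ : m Aᶜ ≤ δ := by linarith
  have hmAc0 : 0 ≤ m Aᶜ := hnonneg _ (hcompl _ hA)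
  have h1 : (L - ε1) * m A = (L - ε1) - (L - ε1) * m Aᶜ := by
    have hmA' : m A = 1 - m Aᶜ := by linarith
    rw [hmA']; ring
  have h2 : (L - ε1) * m Aᶜ ≤ |L - ε1| * δ := by
    calc (L - ε1) * m Aᶜ ≤ |L - ε1| * m Aᶜ :=
          mul_le_mul_of_nonneg_right (le_abs_self _) hmAc0
      _ ≤ |L - ε1| * δ := mul_le_mul_of_nonneg_left hmAcδ (abs_nonneg _)
  have h3 : M * m Aᶜ ≤ M * δ := mul_le_mul_of_nonneg_left hmAcδ hM0
  have hDδ : D * δ ≤ ε1 := by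
    rw [hδdef]
    calc D * (ε1 / (D + 1)) = ε1 * (D / (D + 1)) := by ring
      _ ≤ ε1 * 1 := by
          refine mul_le_mul_of_nonneg_left ?_ (le_of_lt hε1)
          rw [div_le_one (by linarith)]
          linarith
      _ = ε1 := mul_one _
  have : L - ε1 - D * δ ≤ ∑ i, c i * m (B i) := by
    have : (L - ε1) * m A + (-M) * m Aᶜ ≥ L - ε1 - D * δ := by
      rw [h1, hDdef]
      have : -(M * m Aᶜ) ≥ -(M * δ) := by linarith
      nlinarith
    linarith
  have hεε : ε1 + ε1 = ε := by rw [hε1def]; ring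
  linarith
end
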